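/- Let c be the two-phase speed function with c₁ ≥ c₂ > 0. Then for all x ≥ 0, q ≥ 0 and t > 0, the infimum over continuous, piecewise C¹ paths w : [0,t] → ℝ with w(0) = q and w(t) = x of ∫₀ᵗ c(w(s)) g(w′(s)/c(w(s))) ds equals c₂ t g( (x−q)/(t c₂) ); in particular it is attained by the straight line from (0,q) to (t,x). -/

import Mathlib

open MeasureTheory ProbabilityTheory Real Set Filter Topology

noncomputable section


/-! ### The Hopf–Lax type variational formula for TASEP with discontinuous rates -/

/-- The wedge shape function `g`: `g(y) = -y` for `y ≤ -1`, `(1-y)²/4` for `-1 ≤ y ≤ 1`,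
`0` for `y ≥ 1`. -/
def gfun (y : ℝ) : ℝ := if y ≤ -1 then -y else if y ≤ 1 then (1 - y) ^ 2 / 4 else 0

/-- A continuous, piecewise `C¹` path `w : [0,t] → ℝ` with `w(t) = x`. -/
def IsVPath (t x : ℝ) (w : ℝ → ℝ) : Prop :=
  ContinuousOn w (Icc 0 t) ∧ w t = x ∧
    ∃ (k : ℕ) (s : Fin (k + 1) → ℝ), StrictMono s ∧ s 0 = 0 ∧ s (Fin.last k) = t ∧
      ∀ i : Fin k, ContDiffOn ℝ 1 w (Icc (s i.castSucc) (s i.succ))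

/-- `w` is affine on `[a,b]`. -/
def AffineOnR (w : ℝ → ℝ) (a b : ℝ) : Prop :=
  ∀ u ∈ Icc a b, w u = w a + ((u - a) / (b - a)) * (w b - w a)

/-- A continuous, piecewise linear path `w : [0,t] → ℝ` with `w(t) = x`. -/
def IsPLPath (t x : ℝ) (w : ℝ → ℝ) : Prop :=
  ContinuousOn w (Icc 0 t) ∧ w t = x ∧
    ∃ (k : ℕ) (s : Fin (k + 1) → ℝ), StrictMono s ∧ s 0 = 0 ∧ s (Fin.last k) = t ∧
      ∀ i : Fin k, AffineOnR w (s i.castSucc) (s i.succ)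

/-- `v₀` is an antiderivative of the initial profile `ρ₀`, normalized by `v₀(0) = 0`. -/
def IsV0For (ρ₀ v₀ : ℝ → ℝ) : Prop :=
  v₀ 0 = 0 ∧ ∀ a b : ℝ, v₀ b - v₀ a = ∫ x in a..b, ρ₀ x

/-- The variational formula:
`v(x,t) = sup over paths w with w(t) = x of { v₀(w(0)) - ∫₀ᵗ c(w(s)) g(w'(s)/c(w(s))) ds }`,
with `v(x,0) = v₀(x)`. -/
def vFun (c v₀ : ℝ → ℝ) (x t : ℝ) : ℝ :=
  if t ≤ 0 then v₀ x
  else sSup { A | ∃ w : ℝ → ℝ, IsVPath t x w ∧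
    A = v₀ (w 0) - ∫ s in (0:ℝ)..t, c (w s) * gfun (deriv w s / c (w s)) }

/-- The two-phase speed function: `c₁` to the left of the origin, `c₂` to its right. -/
def twoPhase (c₁ c₂ : ℝ) : ℝ → ℝ := fun u => if u < 0 then c₁ else c₂

/-- The conjugate `(a·h)*(y) = inf_{ρ ∈ ℝ} ( yρ - a ρ(1-ρ) )` of the unrestricted flux. -/
def hstar (a y : ℝ) : ℝ := sInf { v | ∃ ρ : ℝ, v = y * ρ - a * (ρ * (1 - ρ)) }

/-- The Hopf–Lax formula over piecewise linear paths with the conjugate `(c·h)*`. -/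
def VFunPL (c v₀ : ℝ → ℝ) (x t : ℝ) : ℝ :=
  sSup { A | ∃ w : ℝ → ℝ, IsPLPath t x w ∧
    A = v₀ (w 0) + ∫ s in (0:ℝ)..t, hstar (c (w s)) (deriv w s) }


/- ### auxiliary lemmas -/

lemma gfun_nonneg (u : ℝ) : 0 ≤ gfun u := by
  unfold gfun; split_ifs <;> nlinarith [sq_nonneg (1 - u)]

lemma gfun_le (u : ℝ) : gfun u ≤ 1 + |u| := by
  unfold gfun
  rcases abs_cases u with ⟨h, h'⟩ | ⟨h, h'⟩ <;> split_ifs <;> nlinarith [sq_nonneg (1+u)]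

lemma scale_mono (b a y : ℝ) (hb : 0 < b) (hba : b ≤ a) :
    b * gfun (y / b) ≤ a * gfun (y / a) := by
  have ha : 0 < a := hb.trans_le hba
  have hp : y / b * b = y := div_mul_cancel₀ y hb.ne'
  have hr : y / a * a = y := div_mul_cancel₀ y ha.ne'
  set p := y / b with hpdef
  set r := y / a with hrdef
  clear_value p r
  clear hpdef hrdef
  have hpr : p * b = r * a := by rw [hp, hr]
  clear hp hr
  unfold gfun
  split_ifs with h1 h2 h3 h4 h5 h6 h7 h8 <;> try linarith
  · nlinarith [mul_nonneg ha.le (sq_nonneg (1 + r))]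
  · nlinarith
  · nlinarith
  · have k1 : 0 ≤ (1 - p) * (1 + r) := mul_nonneg (by linarith) (by nlinarith)
    have k2 : 0 ≤ (1 + p) * (1 - r) := mul_nonneg (by nlinarith) (by linarith)
    have k3 : 0 ≤ 1 - p * r := by nlinarith
    have k4 : 0 ≤ (a - b) * (a * b) * (1 - p * r) :=
      mul_nonneg (mul_nonneg (by linarith) (by positivity)) k3
    nlinarith [k4, mul_pos ha hb, sq_nonneg (p*b - r*a)]
  · nlinarith
  · nlinarith
  · nlinarith [mul_nonneg ha.le (sq_nonneg (1 - r))]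

def gslope (m : ℝ) : ℝ := if m ≤ -1 then -1 else if m ≤ 1 then -(1 - m) / 2 else 0

lemma gfun_support (m u : ℝ) : gfun m + gslope m * (u - m) ≤ gfun u := by
  unfold gfun gslope
  split_ifs <;> nlinarith [sq_nonneg (1 + u), sq_nonneg (u - m), sq_nonneg (1 + m),
    sq_nonneg (1 - m), sq_nonneg (u + m), sq_nonneg (2 - u - m), sq_nonneg (u + m - 2)]

lemma piece_ftc (w : ℝ → ℝ) (a b : ℝ) (hab : a < b) (hw : ContDiffOn ℝ 1 w (Icc a b)) :
    IntervalIntegrable (deriv w) volume a b ∧ (∫ s in a..b, deriv w s) = w b - w a := by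
  have hu : UniqueDiffOn ℝ (Icc a b) := uniqueDiffOn_Icc hab
  set φ := derivWithin w (Icc a b) with hφ
  have hφc : ContinuousOn φ (Icc a b) := hw.continuousOn_derivWithin hu le_rfl
  have hd : ∀ u ∈ Ioo a b, HasDerivAt w (deriv w u) u := by
    intro u hu'
    exact ((hw.differentiableOn one_ne_zero u (Ioo_subset_Icc_self hu')).differentiableAt
      (Icc_mem_nhds hu'.1 hu'.2)).hasDerivAt
  have heq : ∀ u ∈ Ioo a b, deriv w u = φ u := by
    intro u hu'
    exact (derivWithin_of_mem_nhds (Icc_mem_nhds hu'.1 hu'.2)).symm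
  have hae : deriv w =ᵐ[volume.restrict (Ioc a b)] φ := by
    rw [← Measure.restrict_congr_set Ioo_ae_eq_Ioc]
    filter_upwards [ae_restrict_mem measurableSet_Ioo] with u hu' using heq u hu'
  have hint : IntegrableOn (deriv w) (Ioc a b) :=
    ((hφc.integrableOn_Icc).mono_set Ioc_subset_Icc_self).congr hae.symm
  have hii : IntervalIntegrable (deriv w) volume a b :=
    (intervalIntegrable_iff_integrableOn_Ioc_of_le hab.le).2 hint
  exact ⟨hii, intervalIntegral.integral_eq_sub_of_hasDeriv_right_of_le hab.le hw.continuousOn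
    (fun u hu' => (hd u hu').hasDerivWithinAt) hii⟩

lemma vpath_deriv (t x : ℝ) (w : ℝ → ℝ) (h : IsVPath t x w) :
    IntervalIntegrable (deriv w) volume 0 t ∧ (∫ s in (0:ℝ)..t, deriv w s) = x - w 0 := by
  obtain ⟨hc, hwt, k, s, hmono, h0, hlast, hpiece⟩ := h
  set a : ℕ → ℝ := fun n => s ⟨min n k, by omega⟩ with hadef
  have ha0 : a 0 = 0 := by
    rw [hadef]
    exact (congrArg s (Fin.ext (by simp) : (⟨min 0 k, by omega⟩ : Fin (k+1)) = 0)).trans h0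
  have hak : a k = t := by
    rw [hadef]
    exact (congrArg s (Fin.ext (by simp) : (⟨min k k, by omega⟩ : Fin (k+1)) = Fin.last k)).trans hlast
  have hadj : ∀ i, i < k → IntervalIntegrable (deriv w) volume (a i) (a (i+1)) ∧
      (∫ u in (a i)..(a (i+1)), deriv w u) = w (a (i+1)) - w (a i) := by
    intro i hi
    have e1 : a i = s ((⟨i, hi⟩ : Fin k).castSucc) := by
      rw [hadef]; exact congrArg s (Fin.ext (by simp [Nat.min_eq_left hi.le]))
    have e2 : a (i+1) = s ((⟨i, hi⟩ : Fin k).succ) := by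
      rw [hadef]; exact congrArg s (Fin.ext (by simp [Nat.min_eq_left hi]))
    have hlt : a i < a (i+1) := by
      rw [e1, e2]; exact hmono Fin.castSucc_lt_succ
    exact piece_ftc w (a i) (a (i+1)) hlt (by rw [e1, e2]; exact hpiece ⟨i, hi⟩)
  have hii : IntervalIntegrable (deriv w) volume (a 0) (a k) :=
    IntervalIntegrable.trans_iterate (fun i hi => (hadj i hi).1)
  have hsum := intervalIntegral.sum_integral_adjacent_intervals (μ := volume) (f := deriv w)
    (fun i hi => (hadj i hi).1)
  have hsum2 : (∑ i ∈ Finset.range k, (w (a (i+1)) - w (a i))) = w (a k) - w (a 0) :=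
    Finset.sum_range_sub (fun n => w (a n)) k
  rw [ha0, hak] at hii
  refine ⟨hii, ?_⟩
  calc (∫ u in (0:ℝ)..t, deriv w u) = ∫ u in (a 0)..(a k), deriv w u := by rw [ha0, hak]
    _ = ∑ i ∈ Finset.range k, ∫ u in (a i)..(a (i+1)), deriv w u := hsum.symm
    _ = ∑ i ∈ Finset.range k, (w (a (i+1)) - w (a i)) :=
        Finset.sum_congr rfl fun i hi => (hadj i (Finset.mem_range.1 hi)).2
    _ = w (a k) - w (a 0) := hsum2
    _ = x - w 0 := by rw [ha0, hak, hwt]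

/-- Theorem: for the two-phase speed function and `x, q ≥ 0` the action infimum between `q`
and `x` equals `c₂ t g((x-q)/(t c₂))` and is attained by the straight-line path. -/
theorem stmt17 (c₁ c₂ x q t : ℝ) (h₁₂ : c₂ ≤ c₁) (h₂ : 0 < c₂)
    (hx : 0 ≤ x) (hq : 0 ≤ q) (ht : 0 < t) :
    IsLeast
      { A | ∃ w : ℝ → ℝ, IsVPath t x w ∧ w 0 = q ∧
          A = ∫ s in (0:ℝ)..t,
            twoPhase c₁ c₂ (w s) * gfun (deriv w s / twoPhase c₁ c₂ (w s)) }
      (c₂ * t * gfun ((x - q) / (t * c₂))) ∧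
    IsVPath t x (fun s => q + s * ((x - q) / t)) ∧
    (fun s : ℝ => q + s * ((x - q) / t)) 0 = q ∧
    (∫ s in (0:ℝ)..t,
        twoPhase c₁ c₂ (q + s * ((x - q) / t)) *
          gfun (deriv (fun u : ℝ => q + u * ((x - q) / t)) s /
            twoPhase c₁ c₂ (q + s * ((x - q) / t)))) =
      c₂ * t * gfun ((x - q) / (t * c₂)) := by
  set m : ℝ := (x - q) / (t * c₂) with hm
  have hmval : c₂ * m * t = x - q := by rw [hm]; field_simp
  have hgm : Measurable gfun := by
    unfold gfun
    exact Measurable.ite (measurableSet_le measurable_id measurable_const)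
      measurable_neg (Measurable.ite (measurableSet_le measurable_id measurable_const)
      (((measurable_const.sub measurable_id).pow_const 2).div_const 4) measurable_const)
  have htp : Measurable (twoPhase c₁ c₂) :=
    Measurable.ite (measurableSet_lt measurable_id measurable_const)
      measurable_const measurable_const
  have hpos_c : ∀ z, 0 < twoPhase c₁ c₂ z := fun z => by
    unfold twoPhase; split_ifs with h; · linarith
    · exact h₂
  have hle_c : ∀ z, twoPhase c₁ c₂ z ≤ c₁ := fun z => by
    unfold twoPhase; split_ifs with h; · exact le_rfl
    · exact h₁₂
  have hc2_c : ∀ z, c₂ ≤ twoPhase c₁ c₂ z := fun z => by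
    unfold twoPhase; split_ifs with h; · exact h₁₂
    · exact le_rfl
  have hlow_pt : ∀ z y : ℝ, c₂ * gfun m + gslope m * (y - c₂ * m) ≤
      twoPhase c₁ c₂ z * gfun (y / twoPhase c₁ c₂ z) := by
    intro z y
    refine le_trans ?_ (scale_mono c₂ _ y h₂ (hc2_c z))
    have h2 := gfun_support m (y / c₂)
    have h3 : c₂ * (y / c₂) = y := by field_simp
    have h4 := mul_le_mul_of_nonneg_left h2 h₂.le
    have h5 : c₂ * (gfun m + gslope m * (y / c₂ - m))
        = c₂ * gfun m + gslope m * (c₂ * (y / c₂) - c₂ * m) := by ring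
    rw [h3] at h5
    linarith [h4, h5.symm.le, h5.le]
  have hpt0 : ∀ z y : ℝ, 0 ≤ twoPhase c₁ c₂ z * gfun (y / twoPhase c₁ c₂ z) :=
    fun z y => mul_nonneg (hpos_c z).le (gfun_nonneg _)
  have hpt1 : ∀ z y : ℝ, twoPhase c₁ c₂ z * gfun (y / twoPhase c₁ c₂ z) ≤ c₁ + |y| := by
    intro z y
    have h0 := hpos_c z
    calc twoPhase c₁ c₂ z * gfun (y / twoPhase c₁ c₂ z)
        ≤ twoPhase c₁ c₂ z * (1 + |y / twoPhase c₁ c₂ z|) :=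
          mul_le_mul_of_nonneg_left (gfun_le _) h0.le
      _ = twoPhase c₁ c₂ z + |y| := by
          rw [abs_div, abs_of_pos h0, mul_add, mul_one, mul_div_cancel₀ _ h0.ne']
      _ ≤ c₁ + |y| := by linarith [hle_c z]
  -- lower bound for any path
  have key : ∀ w : ℝ → ℝ, IsVPath t x w → w 0 = q →
      c₂ * t * gfun m ≤ ∫ s in (0:ℝ)..t,
        twoPhase c₁ c₂ (w s) * gfun (deriv w s / twoPhase c₁ c₂ (w s)) := by
    intro w hV hw0
    obtain ⟨hdint, hdval⟩ := vpath_deriv t x w hV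
    rw [hw0] at hdval
    have hFmeas : AEStronglyMeasurable
        (fun s => twoPhase c₁ c₂ (w s) * gfun (deriv w s / twoPhase c₁ c₂ (w s)))
        (volume.restrict (Ioc 0 t)) := by
      have hwm : AEMeasurable w (volume.restrict (Ioc 0 t)) :=
        (hV.1.mono Ioc_subset_Icc_self).aemeasurable measurableSet_Ioc
      have hcw : AEMeasurable (fun s => twoPhase c₁ c₂ (w s)) (volume.restrict (Ioc 0 t)) :=
        htp.comp_aemeasurable hwm
      exact (hcw.mul (hgm.comp_aemeasurable
        ((measurable_deriv w).aemeasurable.div hcw))).aestronglyMeasurable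
    have hbd_int : IntegrableOn (fun s => c₁ + |deriv w s|) (Ioc 0 t) := by
      have h1 : IntegrableOn (deriv w) (Ioc 0 t) :=
        (intervalIntegrable_iff_integrableOn_Ioc_of_le ht.le).1 hdint
      exact (integrableOn_const (by exact measure_Ioc_lt_top.ne) (by simp) : Integrable (fun _ => c₁) (volume.restrict (Ioc 0 t))).add h1.abs
    have hFint : IntervalIntegrable
        (fun s => twoPhase c₁ c₂ (w s) * gfun (deriv w s / twoPhase c₁ c₂ (w s))) volume 0 t := by
      rw [intervalIntegrable_iff_integrableOn_Ioc_of_le ht.le]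
      refine Integrable.mono' hbd_int hFmeas (Filter.Eventually.of_forall fun s => ?_)
      rw [Real.norm_eq_abs, abs_of_nonneg (hpt0 _ _)]
      exact hpt1 _ _
    have hGint : IntervalIntegrable
        (fun s => c₂ * gfun m + gslope m * (deriv w s - c₂ * m)) volume 0 t :=
      intervalIntegrable_const.add ((hdint.sub intervalIntegrable_const).const_mul _)
    have hGval : (∫ s in (0:ℝ)..t, (c₂ * gfun m + gslope m * (deriv w s - c₂ * m)))
        = c₂ * t * gfun m := by
      rw [intervalIntegral.integral_add intervalIntegrable_const
          ((hdint.sub intervalIntegrable_const).const_mul _),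
        intervalIntegral.integral_const, intervalIntegral.integral_const_mul,
        intervalIntegral.integral_sub hdint intervalIntegrable_const,
        hdval, intervalIntegral.integral_const]
      simp only [smul_eq_mul, sub_zero]
      have h6 : t * (c₂ * m) = x - q := by rw [← hmval]; ring
      rw [h6, sub_self, mul_zero, add_zero]; ring
    calc c₂ * t * gfun m
        = ∫ s in (0:ℝ)..t, (c₂ * gfun m + gslope m * (deriv w s - c₂ * m)) := hGval.symm
      _ ≤ _ := intervalIntegral.integral_mono_on ht.le hGint hFint
          (fun s _ => hlow_pt (w s) (deriv w s))
  -- straight line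
  set v : ℝ := (x - q) / t with hv
  have htv : t * v = x - q := by rw [hv]; field_simp
  have hderiv₀ : ∀ s, deriv (fun u : ℝ => q + u * v) s = v := fun s => by
    simpa using (((hasDerivAt_id s).mul_const v).const_add q).deriv

  have hwnn : ∀ s ∈ Icc (0:ℝ) t, 0 ≤ q + s * v := by
    intro s hs
    rcases le_or_gt 0 v with h | h
    · have := mul_nonneg hs.1 h; linarith
    · nlinarith [hs.2, htv, hx]
  have hVP : IsVPath t x (fun s => q + s * v) := by
    refine ⟨(continuous_const.add (continuous_id.mul continuous_const)).continuousOn,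
      show q + t * v = x by linarith [htv], 1, ![0, t], ?_, rfl, ?_, ?_⟩
    · rw [Fin.strictMono_iff_lt_succ]
      intro i
      fin_cases i
      simpa using ht
    · simp [Fin.last]
    · intro i
      exact (contDiff_const.add (contDiff_id.mul contDiff_const)).contDiffOn
  have hw00 : (fun s : ℝ => q + s * v) 0 = q := by simp
  have hIeq : (∫ s in (0:ℝ)..t, twoPhase c₁ c₂ (q + s * v) *
      gfun (deriv (fun u : ℝ => q + u * v) s / twoPhase c₁ c₂ (q + s * v)))
      = c₂ * t * gfun m := by
    rw [intervalIntegral.integral_congr (g := fun _ => c₂ * gfun (v / c₂)) ?_]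
    · rw [intervalIntegral.integral_const, smul_eq_mul, sub_zero]
      have hvm : v / c₂ = m := by rw [hv, hm, div_div]
      rw [hvm]; ring
    · intro s hs
      rw [uIcc_of_le ht.le] at hs
      have h0 : twoPhase c₁ c₂ (q + s * v) = c₂ := by
        unfold twoPhase
        exact if_neg (not_lt.2 (hwnn s hs))
      simp only [hderiv₀, h0]
  exact ⟨⟨⟨fun s => q + s * v, hVP, hw00, hIeq.symm⟩,
    fun A hA => by obtain ⟨w, hV, hw0, rfl⟩ := hA; exact key w hV hw0⟩, hVP, hw00, hIeq⟩


end
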